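/- arXiv:2312.02294 — 3 statements merged into one kernel-verified Lean document; each statement's English description precedes it below -/
import Mathlib

section
/- Let L > 0 and let u : [0,L]² → ℝ be of class C³. Define v(x,y) := −∫ₓ^L u_y(s,y) ds and suppose that v_y(x,y) + u_xxx(x,y) = 0 for all (x,y) ∈ Ω, together with the boundary conditions u(0,y) = u(L,y) = 0 and u_x(0,y) = u_x(L,y) = 0 for all y ∈ [0,L], u(x,L) = 0, u_y(x,L) = 0 and u_y(x,0) = 0 for all x ∈ [0,L], and ∫₀^L u_y(s,y) ds = 0 for all y ∈ [0,L]. Then u is identically zero on [0,L]² (and consequently v is identically zero). -/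
open MeasureTheory Real
open Set

noncomputable section

/-- Partial derivative in `x` of `u(x,y)`. -/
def pdx (u : ℝ → ℝ → ℝ) (x y : ℝ) : ℝ := deriv (fun x' => u x' y) x

/-- Third partial derivative in `x` of `u(x,y)`. -/
def pdx3 (u : ℝ → ℝ → ℝ) (x y : ℝ) : ℝ := iteratedDeriv 3 (fun x' => u x' y) x

/-- Partial derivative in `y` of `u(x,y)`. -/
def pdy (u : ℝ → ℝ → ℝ) (x y : ℝ) : ℝ := deriv (fun y' => u x y') y

/-- Second partial derivative in `y` of `u(x,y)`. -/
def pdy2 (u : ℝ → ℝ → ℝ) (x y : ℝ) : ℝ := iteratedDeriv 2 (fun y' => u x y') y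

/-- The nonlocal operator `(∂ₓ⁻¹ w)(x,y) = -∫ₓ^L w(s,y) ds`. -/
def pxInv (L : ℝ) (w : ℝ → ℝ → ℝ) (x y : ℝ) : ℝ := -(∫ s in x..L, w s y)

/-- The adjoint nonlocal operator `((∂ₓ⁻¹)* w)(x,y) = ∫₀^x w(s,y) ds`. -/
def pxInvStar (w : ℝ → ℝ → ℝ) (x y : ℝ) : ℝ := ∫ s in (0:ℝ)..x, w s y

private lemma ae_ne_real (c : ℝ) : ∀ᵐ x : ℝ ∂(volume : Measure ℝ), x ≠ c := by
  rw [ae_iff]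
  have h : {x : ℝ | ¬x ≠ c} = {c} := by ext; simp
  rw [h]; exact measure_singleton c

private lemma hasDerivAt_primitive {f : ℝ → ℝ} (hf : Continuous f) (a x : ℝ) :
    HasDerivAt (fun t => ∫ s in a..t, f s) (f x) x :=
  intervalIntegral.integral_hasDerivAt_right (hf.intervalIntegrable a x)
    (hf.stronglyMeasurableAtFilter volume (nhds x)) hf.continuousAt

private lemma continuous_param_integral {f : ℝ → ℝ → ℝ}
    (hf : Continuous fun p : ℝ × ℝ => f p.1 p.2) (b : ℝ) :
    Continuous fun p : ℝ × ℝ => ∫ t in p.1..b, f t p.2 := by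
  have h0 : Continuous (Function.uncurry fun (p : ℝ × ℝ) t => f t p.2) :=
    hf.comp (continuous_snd.prodMk (continuous_snd.comp continuous_fst))
  have h1 := intervalIntegral.continuous_parametric_intervalIntegral_of_continuous
    (μ := volume) (f := fun (p : ℝ × ℝ) t => f t p.2) (a₀ := b) h0 continuous_fst
  have h2 : (fun p : ℝ × ℝ => ∫ t in p.1..b, f t p.2)
      = fun p : ℝ × ℝ => -∫ t in b..p.1, f t p.2 := by
    funext p; rw [← intervalIntegral.integral_symm]
  rw [h2]; exact h1.neg

private lemma hasDerivAt_param_integral {f f' : ℝ → ℝ → ℝ}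
    (hf : Continuous fun p : ℝ × ℝ => f p.1 p.2)
    (hf' : Continuous fun p : ℝ × ℝ => f' p.1 p.2)
    (hd : ∀ t x : ℝ, HasDerivAt (fun x' => f t x') (f' t x) x)
    (a b x₀ : ℝ) :
    HasDerivAt (fun x => ∫ t in a..b, f t x) (∫ t in a..b, f' t x₀) x₀ := by
  obtain ⟨C, hC⟩ := (isCompact_uIcc.prod (isCompact_closedBall x₀ 1)).exists_bound_of_continuousOn
    hf'.continuousOn
  have h := intervalIntegral.hasDerivAt_integral_of_dominated_loc_of_deriv_le
    (F := fun x t => f t x) (F' := fun x t => f' t x) (x₀ := x₀) (a := a) (b := b)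
    (bound := fun _ => C) (μ := volume) (Metric.ball_mem_nhds x₀ one_pos)
    (Filter.Eventually.of_forall fun x =>
      ((hf.comp (continuous_id.prodMk continuous_const)).aestronglyMeasurable))
    ((hf.comp (continuous_id.prodMk continuous_const)).intervalIntegrable a b)
    ((hf'.comp (continuous_id.prodMk continuous_const)).aestronglyMeasurable)
    (Filter.Eventually.of_forall fun t ht x hx =>
      hC (t, x) ⟨uIoc_subset_uIcc ht, Metric.ball_subset_closedBall hx⟩)
    (intervalIntegrable_const)
    (Filter.Eventually.of_forall fun t _ x _ => hd t x)
  exact h.2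

/-- x-partial derivative as a function on the plane. -/
private def pFx (g : ℝ × ℝ → ℝ) : ℝ × ℝ → ℝ := fun p => fderiv ℝ g p (1, 0)

/-- y-partial derivative as a function on the plane. -/
private def pFy (g : ℝ × ℝ → ℝ) : ℝ × ℝ → ℝ := fun p => fderiv ℝ g p (0, 1)

private lemma hasDerivAt_slice_x {g : ℝ × ℝ → ℝ} (hg : Differentiable ℝ g) (x y : ℝ) :
    HasDerivAt (fun x' => g (x', y)) (pFx g (x, y)) x :=
  (hg (x, y)).hasFDerivAt.comp_hasDerivAt x ((hasDerivAt_id x).prodMk (hasDerivAt_const x y))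

private lemma hasDerivAt_slice_y {g : ℝ × ℝ → ℝ} (hg : Differentiable ℝ g) (x y : ℝ) :
    HasDerivAt (fun y' => g (x, y')) (pFy g (x, y)) y :=
  (hg (x, y)).hasFDerivAt.comp_hasDerivAt y ((hasDerivAt_const y x).prodMk (hasDerivAt_id y))

private lemma contDiff_pFx {m n : WithTop ℕ∞} {g : ℝ × ℝ → ℝ} (hg : ContDiff ℝ n g)
    (hmn : m + 1 ≤ n) : ContDiff ℝ m (pFx g) :=
  (ContinuousLinearMap.apply ℝ ℝ ((1:ℝ), (0:ℝ))).contDiff.comp (hg.fderiv_right hmn)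

private lemma contDiff_pFy {m n : WithTop ℕ∞} {g : ℝ × ℝ → ℝ} (hg : ContDiff ℝ n g)
    (hmn : m + 1 ≤ n) : ContDiff ℝ m (pFy g) :=
  (ContinuousLinearMap.apply ℝ ℝ ((0:ℝ), (1:ℝ))).contDiff.comp (hg.fderiv_right hmn)

private lemma fderiv_fderiv_apply {g : ℝ × ℝ → ℝ} (hdg : Differentiable ℝ (fderiv ℝ g))
    (p w w' : ℝ × ℝ) :
    fderiv ℝ (fun q => fderiv ℝ g q w) p w' = fderiv ℝ (fderiv ℝ g) p w' w := by
  have h : HasFDerivAt (fun q => fderiv ℝ g q w)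
      ((ContinuousLinearMap.apply ℝ ℝ w).comp (fderiv ℝ (fderiv ℝ g) p)) p :=
    (ContinuousLinearMap.apply ℝ ℝ w).hasFDerivAt.comp p (hdg p).hasFDerivAt
  rw [h.fderiv]; rfl

private lemma mixed_symm {g : ℝ × ℝ → ℝ} (hg : ContDiff ℝ 3 g) (p : ℝ × ℝ) :
    pFy (pFx g) p = pFx (pFy g) p := by
  have hdg : Differentiable ℝ (fderiv ℝ g) :=
    (hg.fderiv_right (m := 1) (by norm_num)).differentiable (by norm_num)
  show fderiv ℝ (fun q => fderiv ℝ g q (1, 0)) p (0, 1)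
      = fderiv ℝ (fun q => fderiv ℝ g q (0, 1)) p (1, 0)
  rw [fderiv_fderiv_apply hdg, fderiv_fderiv_apply hdg]
  exact second_derivative_symmetric
    (fun q => ((hg.differentiable (by norm_num)) q).hasFDerivAt)
    (hdg p).hasFDerivAt _ _

/-- `λ = 0` case of the spectral uniqueness problem without drift term: if
`v(x,y) = -∫ₓ^L u_y(s,y) ds` satisfies `v_y + u_xxx = 0` on `Ω` and `u` satisfies the
over-determined boundary conditions, then `u ≡ 0` (and consequently `v ≡ 0`) on `[0,L]²`. -/
theorem kp_spectral_uniqueness_lambda_zero (L : ℝ) (hL : 0 < L)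
    (u v : ℝ → ℝ → ℝ) (hu : ContDiff ℝ 3 (fun p : ℝ × ℝ => u p.1 p.2))
    (hv : ∀ x y : ℝ, v x y = -(∫ s in x..L, pdy u s y))
    (heq : ∀ x ∈ Set.Ioo (0:ℝ) L, ∀ y ∈ Set.Ioo (0:ℝ) L,
      pdy v x y + pdx3 u x y = 0)
    (hbx : ∀ y ∈ Set.Icc (0:ℝ) L,
      u 0 y = 0 ∧ u L y = 0 ∧ pdx u 0 y = 0 ∧ pdx u L y = 0)
    (hby : ∀ x ∈ Set.Icc (0:ℝ) L, u x L = 0 ∧ pdy u x L = 0 ∧ pdy u x 0 = 0)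
    (hint : ∀ y ∈ Set.Icc (0:ℝ) L, (∫ s in (0:ℝ)..L, pdy u s y) = 0) :
    (∀ x ∈ Set.Icc (0:ℝ) L, ∀ y ∈ Set.Icc (0:ℝ) L, u x y = 0) ∧
    (∀ x ∈ Set.Icc (0:ℝ) L, ∀ y ∈ Set.Icc (0:ℝ) L, v x y = 0) := by
  set F : ℝ × ℝ → ℝ := fun p : ℝ × ℝ => u p.1 p.2 with hFdef
  -- smoothness of the various partial derivatives
  have hFx2 : ContDiff ℝ 2 (pFx F) := contDiff_pFx hu (by norm_num)
  have hFy2 : ContDiff ℝ 2 (pFy F) := contDiff_pFy hu (by norm_num)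
  have hFxx1 : ContDiff ℝ 1 (pFx (pFx F)) := contDiff_pFx hFx2 (by norm_num)
  have hFdiff : Differentiable ℝ F := hu.differentiable (by norm_num)
  have hFxdiff : Differentiable ℝ (pFx F) := hFx2.differentiable (by norm_num)
  have hFydiff : Differentiable ℝ (pFy F) := hFy2.differentiable (by norm_num)
  have hFxxdiff : Differentiable ℝ (pFx (pFx F)) := hFxx1.differentiable (by norm_num)
  have cFx : Continuous (pFx F) := hFx2.continuous
  have cFy : Continuous (pFy F) := hFy2.continuous
  have cFxx : Continuous (pFx (pFx F)) := hFxx1.continuous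
  have cFxxx : Continuous (pFx (pFx (pFx F))) := (contDiff_pFx (m := 0) hFxx1 (by norm_num)).continuous
  have cFxy : Continuous (pFy (pFx F)) := (contDiff_pFy (m := 1) hFx2 (by norm_num)).continuous
  have cFyx : Continuous (pFx (pFy F)) := (contDiff_pFx (m := 1) hFy2 (by norm_num)).continuous
  have cFyy : Continuous (pFy (pFy F)) := (contDiff_pFy (m := 1) hFy2 (by norm_num)).continuous
  -- slice derivatives
  have hdx : ∀ x y : ℝ, HasDerivAt (fun x' => u x' y) (pFx F (x, y)) x := fun x y =>
    hasDerivAt_slice_x hFdiff x y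
  have hdy : ∀ x y : ℝ, HasDerivAt (fun y' => u x y') (pFy F (x, y)) y := fun x y =>
    hasDerivAt_slice_y hFdiff x y
  have hdx2 : ∀ x y : ℝ, HasDerivAt (fun x' => pFx F (x', y)) (pFx (pFx F) (x, y)) x :=
    fun x y => hasDerivAt_slice_x hFxdiff x y
  have hdx3 : ∀ x y : ℝ, HasDerivAt (fun x' => pFx (pFx F) (x', y)) (pFx (pFx (pFx F)) (x, y)) x :=
    fun x y => hasDerivAt_slice_x hFxxdiff x y
  have hdxy : ∀ x y : ℝ, HasDerivAt (fun y' => pFx F (x, y')) (pFy (pFx F) (x, y)) y :=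
    fun x y => hasDerivAt_slice_y hFxdiff x y
  have hdyx : ∀ x y : ℝ, HasDerivAt (fun x' => pFy F (x', y)) (pFx (pFy F) (x, y)) x :=
    fun x y => hasDerivAt_slice_x hFydiff x y
  have hdyy : ∀ x y : ℝ, HasDerivAt (fun y' => pFy F (x, y')) (pFy (pFy F) (x, y)) y :=
    fun x y => hasDerivAt_slice_y hFydiff x y
  have pdx_eq : ∀ x y : ℝ, pdx u x y = pFx F (x, y) := fun x y => (hdx x y).deriv
  have pdy_eq : ∀ x y : ℝ, pdy u x y = pFy F (x, y) := fun x y => (hdy x y).deriv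
  have pdx3_eq : ∀ x y : ℝ, pdx3 u x y = pFx (pFx (pFx F)) (x, y) := by
    intro x y
    have d1 : deriv (fun x' => u x' y) = fun x' => pFx F (x', y) :=
      funext fun t => (hdx t y).deriv
    have d2 : deriv (fun x' => pFx F (x', y)) = fun x' => pFx (pFx F) (x', y) :=
      funext fun t => (hdx2 t y).deriv
    show iteratedDeriv 3 (fun x' => u x' y) x = _
    rw [show (3:ℕ) = 2 + 1 from rfl, iteratedDeriv_succ, iteratedDeriv_succ,
      iteratedDeriv_one, d1, d2]
    exact (hdx3 x y).deriv
  -- properties of v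
  have hv_eq : ∀ x y : ℝ, v x y = ∫ s in L..x, pFy F (s, y) := by
    intro x y
    rw [hv x y, intervalIntegral.integral_symm, neg_neg]
    exact intervalIntegral.integral_congr fun s _ => pdy_eq s y
  have cv : Continuous fun p : ℝ × ℝ => v p.1 p.2 := by
    have h2 : (fun p : ℝ × ℝ => v p.1 p.2)
        = fun p : ℝ × ℝ => -∫ s in p.1..L, pFy F (s, p.2) := by
      funext p; rw [hv_eq p.1 p.2, intervalIntegral.integral_symm]
    rw [h2]
    exact (continuous_param_integral (f := fun s t => pFy F (s, t)) cFy L).neg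
  have hvx : ∀ x y : ℝ, HasDerivAt (fun x' => v x' y) (pFy F (x, y)) x := by
    intro x y
    have h2 : (fun x' => v x' y) = fun x' => ∫ s in L..x', pFy F (s, y) :=
      funext fun x' => hv_eq x' y
    rw [h2]
    exact hasDerivAt_primitive (cFy.comp (continuous_id.prodMk continuous_const)) L x
  set vy : ℝ → ℝ → ℝ := fun x y => -∫ s in x..L, pFy (pFy F) (s, y) with hvydef
  have hvy : ∀ x y : ℝ, HasDerivAt (fun y' => v x y') (vy x y) y := by
    intro x y
    have h2 : (fun y' => v x y') = fun y' => -∫ s in x..L, pFy F (s, y') := by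
      funext y'; rw [hv_eq x y', intervalIntegral.integral_symm]
    rw [h2]
    exact (hasDerivAt_param_integral cFy cFyy (fun t x' => hdyy t x') x L y).neg
  have cvy : Continuous fun p : ℝ × ℝ => vy p.1 p.2 :=
    (continuous_param_integral (f := fun s t => pFy (pFy F) (s, t)) cFyy L).neg
  have hv0 : ∀ y ∈ Set.Icc (0:ℝ) L, v 0 y = 0 := by
    intro y hy; rw [hv 0 y, hint y hy, neg_zero]
  have hvL : ∀ y : ℝ, v L y = 0 := by
    intro y; rw [hv L y, intervalIntegral.integral_same, neg_zero]
  -- the equation in terms of vy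
  have hveq : ∀ x ∈ Set.Ioo (0:ℝ) L, ∀ y ∈ Set.Ioo (0:ℝ) L,
      vy x y = -pFx (pFx (pFx F)) (x, y) := by
    intro x hx y hy
    have h := heq x hx y hy
    have h2 : pdy v x y = vy x y := (hvy x y).deriv
    rw [h2, pdx3_eq x y] at h
    linarith
  -- the energy function
  set G : ℝ → ℝ := fun y => ∫ x in (0:ℝ)..L, (v x y * v x y + pFx F (x, y) * pFx F (x, y))
    with hGdef
  set G' : ℝ → ℝ := fun y => ∫ x in (0:ℝ)..L,
      ((vy x y * v x y + v x y * vy x y)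
        + (pFy (pFx F) (x, y) * pFx F (x, y) + pFx F (x, y) * pFy (pFx F) (x, y))) with hG'def
  have hG : ∀ y : ℝ, HasDerivAt G (G' y) y := by
    intro y
    exact hasDerivAt_param_integral
      (f := fun t y' => v t y' * v t y' + pFx F (t, y') * pFx F (t, y'))
      (f' := fun t y' => (vy t y' * v t y' + v t y' * vy t y')
        + (pFy (pFx F) (t, y') * pFx F (t, y') + pFx F (t, y') * pFy (pFx F) (t, y')))
      ((cv.mul cv).add (cFx.mul cFx))
      (((cvy.mul cv).add (cv.mul cvy)).add ((cFxy.mul cFx).add (cFx.mul cFxy)))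
      (fun t x => ((hvy t x).mul (hvy t x)).add ((hdxy t x).mul (hdxy t x)))
      0 L y
  -- the derivative vanishes in the interior
  have hG'0 : ∀ y ∈ Set.Ioo (0:ℝ) L, G' y = 0 := by
    intro y hy
    have hyI : y ∈ Set.Icc (0:ℝ) L := Set.Ioo_subset_Icc_self hy
    set g : ℝ → ℝ := fun x =>
      ((pFx (pFx F) (x, y) * pFy F (x, y) + pFx F (x, y) * pFx (pFy F) (x, y)) * 2
        - (pFy F (x, y) * pFx (pFx F) (x, y) + v x y * pFx (pFx (pFx F)) (x, y)) * 2) with hgdef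
    have hcongr : G' y = ∫ x in (0:ℝ)..L, g x := by
      apply intervalIntegral.integral_congr_ae
      filter_upwards [ae_ne_real L] with x hxL hxmem
      rw [Set.uIoc_of_le hL.le] at hxmem
      have hxIoo : x ∈ Set.Ioo (0:ℝ) L := ⟨hxmem.1, lt_of_le_of_ne hxmem.2 hxL⟩
      rw [hgdef]
      simp only
      rw [hveq x hxIoo y hy, mixed_symm hu (x, y)]
      ring
    rw [hcongr]
    have hH : ∀ x ∈ Set.uIcc (0:ℝ) L,
        HasDerivAt (fun x' => pFx F (x', y) * pFy F (x', y) * 2 - v x' y * pFx (pFx F) (x', y) * 2)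
          (g x) x := by
      intro x _
      have h1 := (((hdx2 x y).mul (hdyx x y)).mul_const 2).sub
        (((hvx x y).mul (hdx3 x y)).mul_const 2)
      exact h1
    have hgi : IntervalIntegrable g volume 0 L := by
      apply Continuous.intervalIntegrable
      have c1 : Continuous fun x : ℝ => v x y :=
        cv.comp (continuous_id.prodMk continuous_const)
      fun_prop
    rw [intervalIntegral.integral_eq_sub_of_hasDerivAt hH hgi]
    have e1 : pFx F (L, y) = 0 := by rw [← pdx_eq]; exact (hbx y hyI).2.2.2
    have e2 : pFx F (0, y) = 0 := by rw [← pdx_eq]; exact (hbx y hyI).2.2.1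
    rw [e1, e2, hvL y, hv0 y hyI]
    ring
  -- G L = 0
  have hGL : G L = 0 := by
    have : G L = ∫ x in (0:ℝ)..L, (0:ℝ) := by
      apply intervalIntegral.integral_congr_ae
      filter_upwards [ae_ne_real L] with x hxL hxmem
      rw [Set.uIoc_of_le hL.le] at hxmem
      have hxIoo : x ∈ Set.Ioo (0:ℝ) L := ⟨hxmem.1, lt_of_le_of_ne hxmem.2 hxL⟩
      have hvxL : v x L = 0 := by
        rw [hv x L]
        have : (∫ s in x..L, pdy u s L) = ∫ s in x..L, (0:ℝ) := by
          apply intervalIntegral.integral_congr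
          intro s hs
          rw [Set.uIcc_of_le hxmem.2] at hs
          exact (hby s ⟨le_of_lt (lt_of_lt_of_le hxIoo.1 hs.1), hs.2⟩).2.1
        rw [this, intervalIntegral.integral_zero, neg_zero]
      have hFxL : pFx F (x, L) = 0 := by
        rw [← pdx_eq]
        have hev : (fun x' => u x' L) =ᶠ[nhds x] fun _ => (0:ℝ) := by
          filter_upwards [isOpen_Ioo.mem_nhds hxIoo] with t ht
          exact (hby t (Set.Ioo_subset_Icc_self ht)).1
        show deriv (fun x' => u x' L) x = 0
        rw [hev.deriv_eq, deriv_const]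
      show v x L * v x L + pFx F (x, L) * pFx F (x, L) = 0
      rw [hvxL, hFxL]; ring
    rw [this, intervalIntegral.integral_zero]
  -- G vanishes identically on [0, L]
  have hGd : Differentiable ℝ G := fun y => (hG y).differentiableAt
  have hG0 : ∀ y ∈ Set.Icc (0:ℝ) L, G y = 0 := by
    have hmono : MonotoneOn G (Set.Icc 0 L) := by
      apply monotoneOn_of_deriv_nonneg (convex_Icc 0 L) hGd.continuous.continuousOn
        hGd.differentiableOn
      intro y hy
      rw [interior_Icc] at hy
      rw [(hG y).deriv, hG'0 y hy]
    have hanti : AntitoneOn G (Set.Icc 0 L) := by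
      apply antitoneOn_of_deriv_nonpos (convex_Icc 0 L) hGd.continuous.continuousOn
        hGd.differentiableOn
      intro y hy
      rw [interior_Icc] at hy
      rw [(hG y).deriv, hG'0 y hy]
    intro y hy
    have hLmem : L ∈ Set.Icc (0:ℝ) L := ⟨hL.le, le_rfl⟩
    have h1 := hmono hy hLmem hy.2
    have h2 := hanti hy hLmem hy.2
    rw [hGL] at h1 h2
    linarith
  -- pointwise vanishing of v and uₓ
  have key : ∀ y ∈ Set.Icc (0:ℝ) L, ∀ x ∈ Set.Icc (0:ℝ) L,
      v x y = 0 ∧ pFx F (x, y) = 0 := by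
    intro y hy
    set φ : ℝ → ℝ := fun x => v x y * v x y + pFx F (x, y) * pFx F (x, y) with hφdef
    have cφ : Continuous φ := by
      have c1 : Continuous fun x : ℝ => v x y :=
        cv.comp (continuous_id.prodMk continuous_const)
      have c2 : Continuous fun x : ℝ => pFx F (x, y) :=
        cFx.comp (continuous_id.prodMk continuous_const)
      exact (c1.mul c1).add (c2.mul c2)
    have φnn : ∀ x, 0 ≤ φ x := fun x => add_nonneg (mul_self_nonneg _) (mul_self_nonneg _)
    set Hh : ℝ → ℝ := fun x => ∫ t in (0:ℝ)..x, φ t with hHhdef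
    have hH : ∀ x, HasDerivAt Hh (φ x) x := fun x => hasDerivAt_primitive cφ 0 x
    have hmH : Monotone Hh :=
      monotone_of_deriv_nonneg (fun x => (hH x).differentiableAt)
        (fun x => by rw [(hH x).deriv]; exact φnn x)
    have hH0 : Hh 0 = 0 := intervalIntegral.integral_same
    have hHL : Hh L = 0 := hG0 y hy
    have hHzero : ∀ x ∈ Set.Icc (0:ℝ) L, Hh x = 0 := by
      intro x hx
      have h1 := hmH hx.2
      have h2 := hmH hx.1
      rw [hHL] at h1; rw [hH0] at h2
      linarith
    have hφIoo : ∀ x ∈ Set.Ioo (0:ℝ) L, φ x = 0 := by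
      intro x hx
      have hev : Hh =ᶠ[nhds x] fun _ => (0:ℝ) := by
        filter_upwards [isOpen_Ioo.mem_nhds hx] with t ht
        exact hHzero t (Set.Ioo_subset_Icc_self ht)
      calc φ x = deriv Hh x := ((hH x).deriv).symm
        _ = 0 := by rw [hev.deriv_eq, deriv_const]
    have hφIcc : ∀ x ∈ Set.Icc (0:ℝ) L, φ x = 0 := by
      have heqon : Set.EqOn φ (fun _ => (0:ℝ)) (Set.Ioo 0 L) := fun t ht => hφIoo t ht
      have hcl := heqon.closure cφ continuous_const
      rw [closure_Ioo hL.ne] at hcl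
      exact fun x hx => hcl hx
    intro x hx
    have h := hφIcc x hx
    have h2 := (add_eq_zero_iff_of_nonneg (mul_self_nonneg (v x y))
      (mul_self_nonneg (pFx F (x, y)))).1 h
    exact ⟨mul_self_eq_zero.1 h2.1, mul_self_eq_zero.1 h2.2⟩
  constructor
  · intro x hx y hy
    have hFx0 : ∀ t ∈ Set.Icc (0:ℝ) L, pFx F (t, y) = 0 := fun t ht => (key y hy t ht).2
    have hftc : (∫ t in (0:ℝ)..x, pFx F (t, y)) = u x y - u 0 y := by
      apply intervalIntegral.integral_eq_sub_of_hasDerivAt (fun t _ => hdx t y)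
      exact (cFx.comp (continuous_id.prodMk continuous_const)).intervalIntegrable 0 x
    have hzero : (∫ t in (0:ℝ)..x, pFx F (t, y)) = 0 := by
      have : (∫ t in (0:ℝ)..x, pFx F (t, y)) = ∫ t in (0:ℝ)..x, (0:ℝ) := by
        apply intervalIntegral.integral_congr
        intro t ht
        rw [Set.uIcc_of_le hx.1] at ht
        exact hFx0 t ⟨ht.1, le_trans ht.2 hx.2⟩
      rw [this, intervalIntegral.integral_zero]
    have hu0 := (hbx y hy).1
    rw [hzero] at hftc
    linarith
  · intro x hx y hy
    exact (key y hy x hx).1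

end
end

section
/- Let L > 0 and let λ ∈ ℝ with λ ≠ 0. Suppose u : [0,L]² → ℝ is of class C³ and satisfies λ u(x,y) + u_xxx(x,y) − ∫ₓ^L u_yy(s,y) ds = 0 for all (x,y) ∈ Ω, together with the boundary conditions u(0,y) = u(L,y) = 0 and u_x(0,y) = u_x(L,y) = 0 for all y ∈ [0,L], u(x,L) = 0, u_y(x,L) = 0 and u_y(x,0) = 0 for all x ∈ [0,L], and ∫₀^L u_y(s,y) ds = 0 for all y ∈ [0,L]. Then u is identically zero on [0,L]². -/
open MeasureTheory Real

noncomputable section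

namespace KPAux

/-- directional derivative applied function -/
def DV (f : ℝ × ℝ → ℝ) (v : ℝ × ℝ) : ℝ × ℝ → ℝ := fun p => fderiv ℝ f p v

lemma contDiff_DV {f : ℝ × ℝ → ℝ} {n m : WithTop ℕ∞} (hf : ContDiff ℝ n f) (hm : m + 1 ≤ n)
    (v : ℝ × ℝ) : ContDiff ℝ m (DV f v) :=
  (ContinuousLinearMap.apply ℝ ℝ v).contDiff.comp (hf.fderiv_right hm)

lemma hasDerivAt_x {f : ℝ × ℝ → ℝ} (hf : Differentiable ℝ f) (x y : ℝ) :
    HasDerivAt (fun x' => f (x', y)) (DV f (1, 0) (x, y)) x := by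
  have h1 : HasDerivAt (fun x' : ℝ => (x', y)) ((1 : ℝ), (0 : ℝ)) x :=
    (hasDerivAt_id x).prodMk (hasDerivAt_const x y)
  exact (hf (x, y)).hasFDerivAt.comp_hasDerivAt x h1

lemma hasDerivAt_y {f : ℝ × ℝ → ℝ} (hf : Differentiable ℝ f) (x y : ℝ) :
    HasDerivAt (fun y' => f (x, y')) (DV f (0, 1) (x, y)) y := by
  have h1 : HasDerivAt (fun y' : ℝ => (x, y')) ((0 : ℝ), (1 : ℝ)) y :=
    (hasDerivAt_const y x).prodMk (hasDerivAt_id y)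
  exact (hf (x, y)).hasFDerivAt.comp_hasDerivAt y h1

/-! ### The partial derivative functions of `u` -/

def FF (u : ℝ → ℝ → ℝ) : ℝ × ℝ → ℝ := fun p => u p.1 p.2
def FX (u : ℝ → ℝ → ℝ) : ℝ × ℝ → ℝ := DV (FF u) (1, 0)
def FY (u : ℝ → ℝ → ℝ) : ℝ × ℝ → ℝ := DV (FF u) (0, 1)
def FXX (u : ℝ → ℝ → ℝ) : ℝ × ℝ → ℝ := DV (FX u) (1, 0)
def FXXX (u : ℝ → ℝ → ℝ) : ℝ × ℝ → ℝ := DV (FXX u) (1, 0)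
def FYY (u : ℝ → ℝ → ℝ) : ℝ × ℝ → ℝ := DV (FY u) (0, 1)

variable {u : ℝ → ℝ → ℝ} (hu : ContDiff ℝ 3 (fun p : ℝ × ℝ => u p.1 p.2))

include hu

lemma contDiff_FF : ContDiff ℝ 3 (FF u) := hu

lemma contDiff_FX : ContDiff ℝ 2 (FX u) := contDiff_DV (contDiff_FF hu) (by norm_num) _

lemma contDiff_FY : ContDiff ℝ 2 (FY u) := contDiff_DV (contDiff_FF hu) (by norm_num) _

lemma contDiff_FXX : ContDiff ℝ 1 (FXX u) := contDiff_DV (contDiff_FX hu) (by norm_num) _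

lemma cont_FXXX : Continuous (FXXX u) :=
  (contDiff_DV (contDiff_FXX hu) (by norm_num) ((1:ℝ), (0:ℝ)) (m := 0)).continuous

lemma cont_FYY : Continuous (FYY u) :=
  (contDiff_DV (contDiff_FY hu) (by norm_num) ((0:ℝ), (1:ℝ)) (m := 0)).continuous

lemma cont_FF : Continuous (FF u) := hu.continuous
lemma cont_FX : Continuous (FX u) := (contDiff_FX hu).continuous
lemma cont_FY : Continuous (FY u) := (contDiff_FY hu).continuous
lemma cont_FXX : Continuous (FXX u) := (contDiff_FXX hu).continuous

lemma hdF_x (x y : ℝ) : HasDerivAt (fun x' => u x' y) (FX u (x, y)) x :=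
  hasDerivAt_x (hu.differentiable (by norm_num)) x y

lemma hdF_y (x y : ℝ) : HasDerivAt (fun y' => u x y') (FY u (x, y)) y :=
  hasDerivAt_y (hu.differentiable (by norm_num)) x y

lemma hdFX_x (x y : ℝ) : HasDerivAt (fun x' => FX u (x', y)) (FXX u (x, y)) x :=
  hasDerivAt_x ((contDiff_FX hu).differentiable (by norm_num)) x y

lemma hdFXX_x (x y : ℝ) : HasDerivAt (fun x' => FXX u (x', y)) (FXXX u (x, y)) x :=
  hasDerivAt_x ((contDiff_FXX hu).differentiable (by norm_num)) x y

lemma hdFY_y (x y : ℝ) : HasDerivAt (fun y' => FY u (x, y')) (FYY u (x, y)) y :=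
  hasDerivAt_y ((contDiff_FY hu).differentiable (by norm_num)) x y

lemma pdx_eq (x y : ℝ) : pdx u x y = FX u (x, y) := (hdF_x hu x y).deriv

lemma pdy_eq (x y : ℝ) : pdy u x y = FY u (x, y) := (hdF_y hu x y).deriv

lemma pdy2_eq (x y : ℝ) : pdy2 u x y = FYY u (x, y) := by
  have h1 : deriv (fun y' => u x y') = fun y' => FY u (x, y') :=
    funext fun y' => (hdF_y hu x y').deriv
  rw [pdy2, iteratedDeriv_succ, iteratedDeriv_one, h1]
  exact (hdFY_y hu x y).deriv

lemma pdx3_eq (x y : ℝ) : pdx3 u x y = FXXX u (x, y) := by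
  have h1 : deriv (fun x' => u x' y) = fun x' => FX u (x', y) :=
    funext fun x' => (hdF_x hu x' y).deriv
  have h2 : deriv (fun x' => FX u (x', y)) = fun x' => FXX u (x', y) :=
    funext fun x' => (hdFX_x hu x' y).deriv
  rw [pdx3, iteratedDeriv_succ, iteratedDeriv_succ, iteratedDeriv_one, h1, h2]
  exact (hdFXX_x hu x y).deriv

end KPAux

namespace KPAux2


/-- Fubini for continuous functions on a rectangle. -/
lemma swap_Icc {f : ℝ → ℝ → ℝ} (hf : Continuous fun p : ℝ × ℝ => f p.1 p.2)
    {a b c d : ℝ} (hab : a ≤ b) (hcd : c ≤ d) :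
    ∫ x in a..b, ∫ y in c..d, f x y = ∫ y in c..d, ∫ x in a..b, f x y := by
  rw [intervalIntegral.integral_of_le hab, intervalIntegral.integral_of_le hcd]
  simp_rw [intervalIntegral.integral_of_le hab, intervalIntegral.integral_of_le hcd]
  apply MeasureTheory.integral_integral_swap
  rw [Function.uncurry_def, Measure.prod_restrict]
  have h1 : IntegrableOn (fun p : ℝ × ℝ => f p.1 p.2) (Set.Icc a b ×ˢ Set.Icc c d)
      (volume.prod volume) := by
    rw [← Measure.volume_eq_prod]
    exact hf.continuousOn.integrableOn_compact (isCompact_Icc.prod isCompact_Icc)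
  exact h1.mono_set (Set.prod_mono Set.Ioc_subset_Icc_self Set.Ioc_subset_Icc_self)

/-- joint continuity of the primitive in the first variable -/
lemma cont_primitive {g : ℝ × ℝ → ℝ} (hg : Continuous g) :
    Continuous fun p : ℝ × ℝ => ∫ s in (0:ℝ)..p.1, g (s, p.2) := by
  apply intervalIntegral.continuous_parametric_intervalIntegral_of_continuous
    (μ := volume) (f := fun (p : ℝ × ℝ) t => g (t, p.2)) ?_ continuous_fst
  exact hg.comp (continuous_snd.prodMk continuous_fst.snd)

/-- FTC: derivative of the primitive -/
lemma hasDerivAt_primitive {g : ℝ × ℝ → ℝ} (hg : Continuous g) (x y : ℝ) :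
    HasDerivAt (fun x' => ∫ s in (0:ℝ)..x', g (s, y)) (g (x, y)) x := by
  have hc : Continuous fun s => g (s, y) := hg.comp (continuous_id.prodMk continuous_const)
  exact intervalIntegral.integral_hasDerivAt_right (hc.intervalIntegrable _ _)
    (hc.stronglyMeasurable.stronglyMeasurableAtFilter) hc.continuousAt

/-- a nonnegative continuous function with zero integral vanishes -/
lemma zero1d {f : ℝ → ℝ} {a b : ℝ} (hab : a < b) (hc : Continuous f)
    (hnn : ∀ x, 0 ≤ f x) (hz : (∫ x in a..b, f x) = 0) : ∀ x ∈ Set.Icc a b, f x = 0 := by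
  by_contra h
  push_neg at h
  obtain ⟨x0, hx0, hfx0⟩ := h
  have hpos : 0 < f x0 := (hnn x0).lt_of_ne (Ne.symm hfx0)
  have hev : ∀ᶠ x in nhds x0, f x0 / 2 < f x :=
    hc.continuousAt.eventually (eventually_gt_nhds (half_lt_self hpos))
  obtain ⟨ε, hε, hball⟩ := Metric.eventually_nhds_iff.mp hev
  set p := max a (x0 - ε / 2) with hp
  set q := min b (x0 + ε / 2) with hq
  have hap : a ≤ p := le_max_left _ _
  have hqb : q ≤ b := min_le_left _ _
  have hpq : p < q :=
    max_lt (lt_min hab (by linarith [hx0.1])) (lt_min (by linarith [hx0.2]) (by linarith))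
  have hmid : ∀ x ∈ Set.Icc p q, f x0 / 2 ≤ f x := by
    intro x hx
    have h1 : x0 - ε / 2 ≤ x := le_trans (le_max_right _ _) hx.1
    have h2 : x ≤ x0 + ε / 2 := le_trans hx.2 (min_le_right _ _)
    refine le_of_lt (hball ?_)
    rw [Real.dist_eq, abs_lt]
    constructor <;> linarith
  have hint : ∀ (s t : ℝ), IntervalIntegrable f volume s t := fun s t => hc.intervalIntegrable s t
  have h1 : 0 ≤ ∫ x in a..p, f x := intervalIntegral.integral_nonneg hap fun x _ => hnn x
  have h3 : 0 ≤ ∫ x in q..b, f x := intervalIntegral.integral_nonneg hqb fun x _ => hnn x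
  have h2 : f x0 / 2 * (q - p) ≤ ∫ x in p..q, f x := by
    have h := intervalIntegral.integral_mono_on hpq.le
      ((continuous_const (y := f x0 / 2)).intervalIntegrable p q) (hint p q) hmid
    rw [intervalIntegral.integral_const, smul_eq_mul] at h
    rw [mul_comm]
    exact h
  have hsplit : ((∫ x in a..p, f x) + ∫ x in p..q, f x) + (∫ x in q..b, f x)
      = ∫ x in a..b, f x := by
    rw [intervalIntegral.integral_add_adjacent_intervals (hint a p) (hint p q)]
    exact intervalIntegral.integral_add_adjacent_intervals (hint a q) (hint q b)
  have hposmid : 0 < f x0 / 2 * (q - p) := mul_pos (by linarith) (by linarith)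
  linarith

end KPAux2

open KPAux KPAux2 in
/-- `λ ≠ 0` case of the spectral uniqueness problem without drift term:
if `λ u + u_xxx - ∫ₓ^L u_yy(s,y) ds = 0` on `Ω` with the over-determined boundary
conditions, then `u ≡ 0` on `[0,L]²`. -/
theorem kp_spectral_uniqueness_no_drift (L lam : ℝ) (hL : 0 < L) (hlam : lam ≠ 0)
    (u : ℝ → ℝ → ℝ) (hu : ContDiff ℝ 3 (fun p : ℝ × ℝ => u p.1 p.2))
    (heq : ∀ x ∈ Set.Ioo (0:ℝ) L, ∀ y ∈ Set.Ioo (0:ℝ) L,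
      lam * u x y + pdx3 u x y - (∫ s in x..L, pdy2 u s y) = 0)
    (hbx : ∀ y ∈ Set.Icc (0:ℝ) L,
      u 0 y = 0 ∧ u L y = 0 ∧ pdx u 0 y = 0 ∧ pdx u L y = 0)
    (hby : ∀ x ∈ Set.Icc (0:ℝ) L, u x L = 0 ∧ pdy u x L = 0 ∧ pdy u x 0 = 0)
    (hint : ∀ y ∈ Set.Icc (0:ℝ) L, (∫ s in (0:ℝ)..L, pdy u s y) = 0) :
    ∀ x ∈ Set.Icc (0:ℝ) L, ∀ y ∈ Set.Icc (0:ℝ) L, u x y = 0 := by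
  simp only [pdx_eq hu, pdy_eq hu, pdy2_eq hu, pdx3_eq hu] at heq hbx hby hint
  have cF : Continuous (fun p : ℝ × ℝ => u p.1 p.2) := hu.continuous
  have cFY := cont_FY hu
  have cFYY := cont_FYY hu
  have cFXXX := cont_FXXX hu
  have cFX := cont_FX hu
  have cFXX := cont_FXX hu
  have cyF : ∀ (g : ℝ × ℝ → ℝ), Continuous g → ∀ y : ℝ, Continuous fun x => g (x, y) :=
    fun g hg y => hg.comp (continuous_id.prodMk continuous_const)
  have cxF : ∀ (g : ℝ × ℝ → ℝ), Continuous g → ∀ x : ℝ, Continuous fun t => g (x, t) :=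
    fun g hg x => hg.comp (continuous_const.prodMk continuous_id)
  set V : ℝ → ℝ → ℝ := fun x y => ∫ s in (0:ℝ)..x, FY u (s, y) with hVdef
  have cU : Continuous (fun p : ℝ × ℝ => pxInvStar u p.1 p.2) := cont_primitive cF
  have cV : Continuous (fun p : ℝ × ℝ => V p.1 p.2) := cont_primitive cFY
  have hdU_x : ∀ x y : ℝ, HasDerivAt (fun x' => pxInvStar u x' y) (u x y) x :=
    fun x y => hasDerivAt_primitive cF x y
  have hdV_x : ∀ x y : ℝ, HasDerivAt (fun x' => V x' y) (FY u (x, y)) x :=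
    fun x y => hasDerivAt_primitive cFY x y
  have cVx : ∀ x : ℝ, Continuous fun τ => V x τ := fun x => cxF _ cV x
  -- the y-derivative of the primitive `pxInvStar u`
  have key : ∀ x : ℝ, 0 ≤ x → ∀ t : ℝ, 0 ≤ t →
      pxInvStar u x t = pxInvStar u x 0 + ∫ τ in (0:ℝ)..t, V x τ := by
    intro x hx t ht
    have h1 : ∀ s : ℝ, u s t - u s 0 = ∫ τ in (0:ℝ)..t, FY u (s, τ) := by
      intro s
      exact (intervalIntegral.integral_eq_sub_of_hasDerivAt
        (fun τ _ => hdF_y hu s τ) ((cxF _ cFY s).intervalIntegrable 0 t)).symm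
    have h2 : (∫ s in (0:ℝ)..x, (u s t - u s 0)) = pxInvStar u x t - pxInvStar u x 0 :=
      intervalIntegral.integral_sub ((cyF _ cF t).intervalIntegrable 0 x)
        ((cyF _ cF 0).intervalIntegrable 0 x)
    have h3 : (∫ s in (0:ℝ)..x, (u s t - u s 0)) = ∫ τ in (0:ℝ)..t, V x τ := by
      calc (∫ s in (0:ℝ)..x, (u s t - u s 0))
          = ∫ s in (0:ℝ)..x, ∫ τ in (0:ℝ)..t, FY u (s, τ) :=
            intervalIntegral.integral_congr (fun s _ => h1 s)
        _ = ∫ τ in (0:ℝ)..t, ∫ s in (0:ℝ)..x, FY u (s, τ) :=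
            swap_Icc (f := fun s τ => FY u (s, τ)) cFY hx ht
        _ = ∫ τ in (0:ℝ)..t, V x τ := rfl
    linarith [h2, h3]
  have hdU_y : ∀ x : ℝ, 0 ≤ x → ∀ t ∈ Set.Ioo (0:ℝ) L,
      HasDerivAt (fun t' => pxInvStar u x t') (V x t) t := by
    intro x hx t ht
    have hft : HasDerivAt (fun t' => pxInvStar u x 0 + ∫ τ in (0:ℝ)..t', V x τ) (V x t) t := by
      have h := intervalIntegral.integral_hasDerivAt_right ((cVx x).intervalIntegrable 0 t)
        ((cVx x).stronglyMeasurable.stronglyMeasurableAtFilter) (cVx x).continuousAt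
      have h' := (hasDerivAt_const t (pxInvStar u x 0)).add h
      rw [zero_add] at h'
      exact h'
    refine hft.congr_of_eventuallyEq ?_
    filter_upwards [isOpen_Ioi.mem_nhds (show t ∈ Set.Ioi (0:ℝ) from ht.1)] with t' ht'
    exact key x hx t' (le_of_lt ht')
  -- splitting of the tail integral
  have hsplitΦ : ∀ x y : ℝ, (∫ s in x..L, FYY u (s, y))
      = (∫ s in (0:ℝ)..L, FYY u (s, y)) - ∫ s in (0:ℝ)..x, FYY u (s, y) := by
    intro x y
    rw [eq_sub_iff_add_eq, add_comm]
    exact intervalIntegral.integral_add_adjacent_intervals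
      ((cyF _ cFYY y).intervalIntegrable 0 x) ((cyF _ cFYY y).intervalIntegrable x L)
  have cΦ : Continuous fun p : ℝ × ℝ => ∫ s in p.1..L, FYY u (s, p.2) := by
    have hfn : (fun p : ℝ × ℝ => ∫ s in p.1..L, FYY u (s, p.2)) = fun p : ℝ × ℝ =>
        (∫ s in (0:ℝ)..L, FYY u (s, p.2)) - ∫ s in (0:ℝ)..p.1, FYY u (s, p.2) :=
      funext fun p => hsplitΦ p.1 p.2
    rw [hfn]
    exact ((cont_primitive cFYY).comp (continuous_const.prodMk continuous_snd)).sub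
      (cont_primitive cFYY)
  -- extension of the equation to the closed square
  have heqC : ∀ x ∈ Set.Icc (0:ℝ) L, ∀ y ∈ Set.Icc (0:ℝ) L,
      lam * u x y + FXXX u (x, y) - (∫ s in x..L, FYY u (s, y)) = 0 := by
    have hG : Continuous fun p : ℝ × ℝ =>
        lam * u p.1 p.2 + FXXX u p - ∫ s in p.1..L, FYY u (s, p.2) :=
      ((continuous_const.mul cF).add cFXXX).sub cΦ
    have h0 : Set.EqOn (fun p : ℝ × ℝ =>
        lam * u p.1 p.2 + FXXX u p - ∫ s in p.1..L, FYY u (s, p.2)) 0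
        (Set.Ioo (0:ℝ) L ×ˢ Set.Ioo (0:ℝ) L) := by
      rintro ⟨x, y⟩ ⟨hx, hy⟩
      simpa using heq x hx y hy
    have h1 := h0.closure hG continuous_zero
    have h2 : closure (Set.Ioo (0:ℝ) L ×ˢ Set.Ioo (0:ℝ) L)
        = Set.Icc (0:ℝ) L ×ˢ Set.Icc (0:ℝ) L := by
      rw [closure_prod_eq, closure_Ioo hL.ne]
    intro x hx y hy
    have hmem : ((x, y) : ℝ × ℝ) ∈ closure (Set.Ioo (0:ℝ) L ×ˢ Set.Ioo (0:ℝ) L) := by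
      rw [h2]; exact Set.mk_mem_prod hx hy
    simpa using h1 hmem
  -- Step 1 : the x-energy identity
  have step1 : ∀ y ∈ Set.Icc (0:ℝ) L,
      lam * (∫ x in (0:ℝ)..L, u x y ^ 2)
        = ∫ x in (0:ℝ)..L, pxInvStar u x y * FYY u (x, y) := by
    intro y hy
    obtain ⟨hb0, hbL, hbx0, hbxL⟩ := hbx y hy
    have i1 : IntervalIntegrable (fun x => lam * u x y ^ 2) volume 0 L :=
      (continuous_const.mul ((cyF _ cF y).pow 2)).intervalIntegrable _ _
    have i2 : IntervalIntegrable (fun x => u x y * FXXX u (x, y)) volume 0 L :=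
      ((cyF _ cF y).mul (cyF _ cFXXX y)).intervalIntegrable _ _
    have i3 : IntervalIntegrable (fun x => u x y * ∫ s in x..L, FYY u (s, y)) volume 0 L :=
      ((cyF _ cF y).mul (cyF _ cΦ y)).intervalIntegrable _ _
    have h0 : (∫ x in (0:ℝ)..L,
        (u x y * (lam * u x y + FXXX u (x, y) - ∫ s in x..L, FYY u (s, y)))) = 0 := by
      have hz : ∀ x ∈ Set.uIcc (0:ℝ) L,
          u x y * (lam * u x y + FXXX u (x, y) - ∫ s in x..L, FYY u (s, y)) = (0:ℝ) := by
        intro x hx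
        rw [heqC x (by rwa [Set.uIcc_of_le hL.le] at hx) y hy, mul_zero]
      rw [intervalIntegral.integral_congr hz]
      simp
    have hexp : (fun x => u x y * (lam * u x y + FXXX u (x, y) - ∫ s in x..L, FYY u (s, y)))
        = fun x => (lam * u x y ^ 2 + u x y * FXXX u (x, y))
            - u x y * ∫ s in x..L, FYY u (s, y) := by
      funext x; ring
    rw [hexp, intervalIntegral.integral_sub (i1.add i2) i3,
      intervalIntegral.integral_add i1 i2, intervalIntegral.integral_const_mul] at h0
    -- IBP in x for the third-derivative term
    have ibpa : (∫ x in (0:ℝ)..L, u x y * FXXX u (x, y)) = 0 := by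
      have h1 := intervalIntegral.integral_mul_deriv_eq_deriv_mul (a := (0:ℝ)) (b := L)
        (u := fun x => u x y) (u' := fun x => FX u (x, y))
        (v := fun x => FXX u (x, y)) (v' := fun x => FXXX u (x, y))
        (fun x _ => hdF_x hu x y) (fun x _ => hdFXX_x hu x y)
        ((cyF _ cFX y).intervalIntegrable _ _) ((cyF _ cFXXX y).intervalIntegrable _ _)
      have h2 : (∫ x in (0:ℝ)..L, FX u (x, y) * FXX u (x, y)) = 0 := by
        have hd : ∀ x ∈ Set.uIcc (0:ℝ) L,
            HasDerivAt (fun x' => FX u (x', y) * FX u (x', y) / 2)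
              (FX u (x, y) * FXX u (x, y)) x := by
          intro x _
          have h := ((hdFX_x hu x y).mul (hdFX_x hu x y)).div_const 2
          have e : FX u (x, y) * FXX u (x, y)
              = (FXX u (x, y) * FX u (x, y) + FX u (x, y) * FXX u (x, y)) / 2 := by ring
          rw [e]
          exact h
        rw [intervalIntegral.integral_eq_sub_of_hasDerivAt hd
          (((cyF _ cFX y).mul (cyF _ cFXX y)).intervalIntegrable _ _)]
        simp [hbx0, hbxL]
      rw [h1, h2]
      simp [hb0, hbL]
    -- IBP in x moving the primitive
    have ibpb : (∫ x in (0:ℝ)..L, u x y * ∫ s in x..L, FYY u (s, y))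
        = ∫ x in (0:ℝ)..L, pxInvStar u x y * FYY u (x, y) := by
      have hdΦ : ∀ x ∈ Set.uIcc (0:ℝ) L,
          HasDerivAt (fun x' => ∫ s in x'..L, FYY u (s, y)) (-(FYY u (x, y))) x := by
        intro x _
        have hfn : (fun x' => ∫ s in x'..L, FYY u (s, y))
            = fun x' => (∫ s in (0:ℝ)..L, FYY u (s, y)) - ∫ s in (0:ℝ)..x', FYY u (s, y) :=
          funext fun x' => hsplitΦ x' y
        rw [hfn]
        have h := (hasDerivAt_const x (∫ s in (0:ℝ)..L, FYY u (s, y))).sub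
          (hasDerivAt_primitive cFYY x y)
        rw [zero_sub] at h
        exact h
      have h1 := intervalIntegral.integral_mul_deriv_eq_deriv_mul (a := (0:ℝ)) (b := L)
        (u := fun x => ∫ s in x..L, FYY u (s, y)) (u' := fun x => -(FYY u (x, y)))
        (v := fun x => pxInvStar u x y) (v' := fun x => u x y)
        hdΦ (fun x _ => hdU_x x y)
        ((cyF _ cFYY y).neg.intervalIntegrable _ _) ((cyF _ cF y).intervalIntegrable _ _)
      have hΦL : (∫ s in L..L, FYY u (s, y)) = 0 := intervalIntegral.integral_same
      have hU0 : pxInvStar u 0 y = 0 := intervalIntegral.integral_same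
      have hneg : (∫ x in (0:ℝ)..L, -(FYY u (x, y)) * pxInvStar u x y)
          = -∫ x in (0:ℝ)..L, pxInvStar u x y * FYY u (x, y) := by
        rw [← intervalIntegral.integral_neg]
        apply intervalIntegral.integral_congr
        intro x _
        ring
      calc (∫ x in (0:ℝ)..L, u x y * ∫ s in x..L, FYY u (s, y))
          = ∫ x in (0:ℝ)..L, (∫ s in x..L, FYY u (s, y)) * u x y := by
            apply intervalIntegral.integral_congr
            intro x _
            ring
        _ = (∫ s in L..L, FYY u (s, y)) * pxInvStar u L y
            - (∫ s in (0:ℝ)..L, FYY u (s, y)) * pxInvStar u 0 y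
            - ∫ x in (0:ℝ)..L, -(FYY u (x, y)) * pxInvStar u x y := h1
        _ = ∫ x in (0:ℝ)..L, pxInvStar u x y * FYY u (x, y) := by
            rw [hΦL, hU0, hneg]
            ring
    linarith [h0, ibpa, ibpb]
  -- Step 2 : integration by parts in y
  have step2 : ∀ x ∈ Set.Icc (0:ℝ) L,
      (∫ t in (0:ℝ)..L, pxInvStar u x t * FYY u (x, t))
        = -∫ t in (0:ℝ)..L, V x t * FY u (x, t) := by
    intro x hx
    obtain ⟨-, hbyL, hby0⟩ := hby x hx
    have h1 := intervalIntegral.integral_mul_deriv_eq_deriv_mul_of_hasDerivAt (a := (0:ℝ)) (b := L)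
      (u := fun t => pxInvStar u x t) (u' := fun t => V x t)
      (v := fun t => FY u (x, t)) (v' := fun t => FYY u (x, t))
      (cxF _ cU x).continuousOn (cxF _ cFY x).continuousOn
      (fun t ht => by
        rw [min_eq_left hL.le, max_eq_right hL.le] at ht
        exact hdU_y x hx.1 t ht)
      (fun t _ => hdFY_y hu x t)
      ((cVx x).intervalIntegrable _ _) ((cxF _ cFYY x).intervalIntegrable _ _)
    rw [h1]
    simp [hbyL, hby0]
  -- Step 3 : the observation trace kills the remaining term
  have step3 : ∀ y ∈ Set.Icc (0:ℝ) L, (∫ x in (0:ℝ)..L, V x y * FY u (x, y)) = 0 := by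
    intro y hy
    have hd : ∀ x ∈ Set.uIcc (0:ℝ) L,
        HasDerivAt (fun x' => V x' y * V x' y / 2) (V x y * FY u (x, y)) x := by
      intro x _
      have h := ((hdV_x x y).mul (hdV_x x y)).div_const 2
      have e : V x y * FY u (x, y) = (FY u (x, y) * V x y + V x y * FY u (x, y)) / 2 := by ring
      rw [e]
      exact h
    rw [intervalIntegral.integral_eq_sub_of_hasDerivAt hd
      (((cyF _ cV y).mul (cyF _ cFY y)).intervalIntegrable _ _)]
    have hV0 : V 0 y = 0 := intervalIntegral.integral_same
    have hVL : V L y = 0 := hint y hy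
    simp [hV0, hVL]
  -- Step 4 : combine everything
  have cu2 : Continuous fun p : ℝ × ℝ => u p.1 p.2 ^ 2 := cF.pow 2
  have hI : lam * ∫ y in (0:ℝ)..L, ∫ x in (0:ℝ)..L, u x y ^ 2 = 0 := by
    have e1 : (∫ y in (0:ℝ)..L, lam * ∫ x in (0:ℝ)..L, u x y ^ 2)
        = ∫ y in (0:ℝ)..L, ∫ x in (0:ℝ)..L, pxInvStar u x y * FYY u (x, y) :=
      intervalIntegral.integral_congr fun y hy =>
        step1 y (by rwa [Set.uIcc_of_le hL.le] at hy)
    have e2 : (∫ y in (0:ℝ)..L, ∫ x in (0:ℝ)..L, pxInvStar u x y * FYY u (x, y))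
        = ∫ x in (0:ℝ)..L, ∫ y in (0:ℝ)..L, pxInvStar u x y * FYY u (x, y) :=
      swap_Icc (f := fun y x => pxInvStar u x y * FYY u (x, y))
        ((cU.comp continuous_swap).mul (cFYY.comp continuous_swap)) hL.le hL.le
    have e3 : (∫ x in (0:ℝ)..L, ∫ y in (0:ℝ)..L, pxInvStar u x y * FYY u (x, y))
        = ∫ x in (0:ℝ)..L, -(∫ y in (0:ℝ)..L, V x y * FY u (x, y)) :=
      intervalIntegral.integral_congr fun x hx =>
        step2 x (by rwa [Set.uIcc_of_le hL.le] at hx)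
    have e4 : (∫ x in (0:ℝ)..L, -(∫ y in (0:ℝ)..L, V x y * FY u (x, y)))
        = -∫ x in (0:ℝ)..L, ∫ y in (0:ℝ)..L, V x y * FY u (x, y) :=
      intervalIntegral.integral_neg
    have e5 : (∫ x in (0:ℝ)..L, ∫ y in (0:ℝ)..L, V x y * FY u (x, y))
        = ∫ y in (0:ℝ)..L, ∫ x in (0:ℝ)..L, V x y * FY u (x, y) :=
      swap_Icc (f := fun x y => V x y * FY u (x, y)) (cV.mul cFY) hL.le hL.le
    have e6 : (∫ y in (0:ℝ)..L, ∫ x in (0:ℝ)..L, V x y * FY u (x, y)) = 0 := by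
      rw [intervalIntegral.integral_congr (g := fun _ => (0:ℝ))
        (fun y hy => step3 y (by rwa [Set.uIcc_of_le hL.le] at hy))]
      simp
    rw [← intervalIntegral.integral_const_mul, e1, e2, e3, e4, e5, e6, neg_zero]
  have hI0 : (∫ y in (0:ℝ)..L, ∫ x in (0:ℝ)..L, u x y ^ 2) = 0 := by
    rcases mul_eq_zero.mp hI with h | h
    · exact absurd h hlam
    · exact h
  have cg : Continuous fun y => ∫ x in (0:ℝ)..L, u x y ^ 2 :=
    intervalIntegral.continuous_parametric_intervalIntegral_of_continuous'
      (f := fun y x => u x y ^ 2) (cu2.comp continuous_swap) 0 L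
  have hg0 : ∀ y ∈ Set.Icc (0:ℝ) L, (∫ x in (0:ℝ)..L, u x y ^ 2) = 0 :=
    zero1d hL cg (fun y => intervalIntegral.integral_nonneg hL.le fun x _ => sq_nonneg _) hI0
  intro x hx y hy
  have h := zero1d hL ((cyF _ cF y).pow 2) (fun x => sq_nonneg _) (hg0 y hy) x hx
  exact (pow_eq_zero_iff (by norm_num : (2:ℕ) ≠ 0)).mp h

end
end

section
/- Let L > 0. Let u : [0,L]² → ℝ be of class C³ and v : [0,L]² → ℝ be of class C¹, and suppose that v_x(x,y) = u_y(x,y) and v_y(x,y) + u_xxx(x,y) = 0 for all (x,y) ∈ Ω, with boundary conditions u(0,y) = u(L,y) = 0 and v(0,y) = v(L,y) = 0 for all y ∈ [0,L]. Then the function Ẽ(y) := ½ ∫₀^L ( v(x,y)² + u_x(x,y)² ) dx is constant on [0,L]. -/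
open MeasureTheory Real Set Metric

noncomputable section

namespace KPaux

lemma hasDerivAt_fst_slice {f : ℝ × ℝ → ℝ} {x y : ℝ}
    (hf : DifferentiableAt ℝ f (x, y)) :
    HasDerivAt (fun x' => f (x', y)) (fderiv ℝ f (x, y) (1, 0)) x := by
  have hc : HasDerivAt (fun x' : ℝ => ((x' : ℝ), y)) ((1 : ℝ), (0 : ℝ)) x :=
    (hasDerivAt_id x).prodMk (hasDerivAt_const x y)
  exact hf.hasFDerivAt.comp_hasDerivAt x hc

lemma hasDerivAt_snd_slice {f : ℝ × ℝ → ℝ} {x y : ℝ}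
    (hf : DifferentiableAt ℝ f (x, y)) :
    HasDerivAt (fun y' => f (x, y')) (fderiv ℝ f (x, y) (0, 1)) y := by
  have hc : HasDerivAt (fun y' : ℝ => (x, (y' : ℝ))) ((0 : ℝ), (1 : ℝ)) y :=
    (hasDerivAt_const y x).prodMk (hasDerivAt_id y)
  exact hf.hasFDerivAt.comp_hasDerivAt y hc

lemma deriv_fst_slice {f : ℝ × ℝ → ℝ} (hf : Differentiable ℝ f) (y : ℝ) :
    deriv (fun x' => f (x', y)) = fun x => fderiv ℝ f (x, y) (1, 0) := by
  funext x
  exact (hasDerivAt_fst_slice (hf _)).deriv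

lemma clairaut {f : ℝ × ℝ → ℝ} (hf : ContDiff ℝ 3 f) (p : ℝ × ℝ) :
    fderiv ℝ (fun q => fderiv ℝ f q (0, 1)) p (1, 0)
      = fderiv ℝ (fun q => fderiv ℝ f q (1, 0)) p (0, 1) := by
  have hdU : ContDiff ℝ 2 (fderiv ℝ f) := hf.fderiv_right (by norm_num)
  have hD2 : HasFDerivAt (fderiv ℝ f) (fderiv ℝ (fderiv ℝ f) p) p :=
    (hdU.differentiable (by norm_num) p).hasFDerivAt
  have hsymm := second_derivative_symmetric
    (f := f) (f' := fderiv ℝ f)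
    (fun q => (hf.differentiable (by norm_num) q).hasFDerivAt) hD2
  have h1 : fderiv ℝ (fun q => fderiv ℝ f q ((0:ℝ), (1:ℝ))) p
      = (ContinuousLinearMap.apply ℝ ℝ ((0:ℝ), (1:ℝ))).comp (fderiv ℝ (fderiv ℝ f) p) :=
    ((ContinuousLinearMap.apply ℝ ℝ ((0:ℝ), (1:ℝ))).hasFDerivAt.comp p hD2).fderiv
  have h2 : fderiv ℝ (fun q => fderiv ℝ f q ((1:ℝ), (0:ℝ))) p
      = (ContinuousLinearMap.apply ℝ ℝ ((1:ℝ), (0:ℝ))).comp (fderiv ℝ (fderiv ℝ f) p) :=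
    ((ContinuousLinearMap.apply ℝ ℝ ((1:ℝ), (0:ℝ))).hasFDerivAt.comp p hD2).fderiv
  rw [h1, h2]
  simpa using hsymm (1, 0) (0, 1)

end KPaux

/-- Constancy of the transverse energy functional
`Ẽ(y) = ½ ∫₀^L (v(x,y)² + u_x(x,y)²) dx` for the first-order system
`v_x = u_y`, `v_y + u_xxx = 0` with `u(0,y) = u(L,y) = v(0,y) = v(L,y) = 0`. -/
theorem kp_transverse_energy_constant (L : ℝ) (hL : 0 < L)
    (u v : ℝ → ℝ → ℝ)
    (hu : ContDiff ℝ 3 (fun p : ℝ × ℝ => u p.1 p.2))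
    (hv : ContDiff ℝ 1 (fun p : ℝ × ℝ => v p.1 p.2))
    (heq : ∀ x ∈ Set.Ioo (0:ℝ) L, ∀ y ∈ Set.Ioo (0:ℝ) L,
      pdx v x y = pdy u x y ∧ pdy v x y + pdx3 u x y = 0)
    (hb : ∀ y ∈ Set.Icc (0:ℝ) L,
      u 0 y = 0 ∧ u L y = 0 ∧ v 0 y = 0 ∧ v L y = 0) :
    ∀ y₁ ∈ Set.Icc (0:ℝ) L, ∀ y₂ ∈ Set.Icc (0:ℝ) L,
      (1/2) * (∫ x in (0:ℝ)..L, ((v x y₁)^2 + (pdx u x y₁)^2))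
        = (1/2) * (∫ x in (0:ℝ)..L, ((v x y₂)^2 + (pdx u x y₂)^2)) := by
  set Uf : ℝ × ℝ → ℝ := fun p => u p.1 p.2 with hUfdef
  set Vf : ℝ × ℝ → ℝ := fun p => v p.1 p.2 with hVfdef
  set U1 : ℝ × ℝ → ℝ := fun p => fderiv ℝ Uf p (1, 0) with hU1def
  set U2 : ℝ × ℝ → ℝ := fun p => fderiv ℝ U1 p (1, 0) with hU2def
  set U3 : ℝ × ℝ → ℝ := fun p => fderiv ℝ U2 p (1, 0) with hU3def
  set Uy : ℝ × ℝ → ℝ := fun p => fderiv ℝ Uf p (0, 1) with hUydef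
  set U1y : ℝ × ℝ → ℝ := fun p => fderiv ℝ U1 p (0, 1) with hU1ydef
  set Vx : ℝ × ℝ → ℝ := fun p => fderiv ℝ Vf p (1, 0) with hVxdef
  set Vy : ℝ × ℝ → ℝ := fun p => fderiv ℝ Vf p (0, 1) with hVydef
  -- smoothness facts
  have hU1s : ContDiff ℝ 2 U1 := (hu.fderiv_right (by norm_num)).clm_apply contDiff_const
  have hU2s : ContDiff ℝ 1 U2 := (hU1s.fderiv_right (by norm_num)).clm_apply contDiff_const
  have hU3c : Continuous U3 :=
    ((hU2s.fderiv_right (m := 0) (by norm_num)).clm_apply contDiff_const).continuous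
  have hUys : ContDiff ℝ 2 Uy := (hu.fderiv_right (by norm_num)).clm_apply contDiff_const
  have hU1ys : ContDiff ℝ 1 U1y := (hU1s.fderiv_right (by norm_num)).clm_apply contDiff_const
  have hVxc : Continuous Vx :=
    ((hv.fderiv_right (m := 0) (by norm_num)).clm_apply contDiff_const).continuous
  have hVyc : Continuous Vy :=
    ((hv.fderiv_right (m := 0) (by norm_num)).clm_apply contDiff_const).continuous
  have hUd : Differentiable ℝ Uf := hu.differentiable (by norm_num)
  have hU1d : Differentiable ℝ U1 := hU1s.differentiable (by norm_num)
  have hU2d : Differentiable ℝ U2 := hU2s.differentiable (by norm_num)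
  have hUyd : Differentiable ℝ Uy := hUys.differentiable (by norm_num)
  have hVd : Differentiable ℝ Vf := hv.differentiable (by norm_num)
  -- identification of the partial derivatives
  have pdx_eq : ∀ x y, pdx u x y = U1 (x, y) := fun x y =>
    (KPaux.hasDerivAt_fst_slice (hUd (x, y))).deriv
  have pdy_u_eq : ∀ x y, pdy u x y = Uy (x, y) := fun x y =>
    (KPaux.hasDerivAt_snd_slice (hUd (x, y))).deriv
  have pdx_v_eq : ∀ x y, pdx v x y = Vx (x, y) := fun x y =>
    (KPaux.hasDerivAt_fst_slice (hVd (x, y))).deriv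
  have pdy_v_eq : ∀ x y, pdy v x y = Vy (x, y) := fun x y =>
    (KPaux.hasDerivAt_snd_slice (hVd (x, y))).deriv
  have hslice1 : ∀ y, deriv (fun x' => u x' y) = fun x => U1 (x, y) := fun y =>
    KPaux.deriv_fst_slice hUd y
  have hslice2 : ∀ y, deriv (fun x' => U1 (x', y)) = fun x => U2 (x, y) := fun y =>
    KPaux.deriv_fst_slice hU1d y
  have pdx3_eq : ∀ x y, pdx3 u x y = U3 (x, y) := by
    intro x y
    show iteratedDeriv 3 (fun x' => u x' y) x = U3 (x, y)
    rw [show (3:ℕ) = 2 + 1 from rfl, iteratedDeriv_succ', hslice1 y,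
      show (2:ℕ) = 1 + 1 from rfl, iteratedDeriv_succ', hslice2 y, iteratedDeriv_one]
    exact (KPaux.hasDerivAt_fst_slice (hU2d (x, y))).deriv
  -- Clairaut
  have hcl : ∀ p : ℝ × ℝ, fderiv ℝ Uy p (1, 0) = U1y p := fun p => KPaux.clairaut hu p
  -- the PDE in terms of the uncurried derivatives
  have heq' : ∀ x ∈ Set.Ioo (0:ℝ) L, ∀ y ∈ Set.Ioo (0:ℝ) L,
      Vx (x, y) = Uy (x, y) ∧ Vy (x, y) + U3 (x, y) = 0 := by
    intro x hx y hy
    obtain ⟨h1, h2⟩ := heq x hx y hy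
    rw [pdx_v_eq, pdy_u_eq] at h1
    rw [pdy_v_eq, pdx3_eq] at h2
    exact ⟨h1, h2⟩
  -- boundary facts
  have hUybd : ∀ (c : ℝ), (∀ y' ∈ Set.Icc (0:ℝ) L, u c y' = 0) →
      ∀ y ∈ Set.Ioo (0:ℝ) L, Uy (c, y) = 0 := by
    intro c hc y hy
    have hev : (fun y' => u c y') =ᶠ[nhds y] fun _ => (0:ℝ) := by
      filter_upwards [Ioo_mem_nhds hy.1 hy.2] with z hz
      exact hc z ⟨hz.1.le, hz.2.le⟩
    have h0 : deriv (fun y' => u c y') y = 0 := by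
      rw [hev.deriv_eq]; exact deriv_const _ _
    rw [← pdy_u_eq]
    exact h0
  -- integrand and its y-derivative
  set Fi : ℝ × ℝ → ℝ := fun p => (Vf p)^2 + (U1 p)^2 with hFidef
  set Fd : ℝ × ℝ → ℝ := fun p => 2 * Vf p * Vy p + 2 * U1 p * U1y p with hFddef
  have hFic : Continuous Fi := ((hv.continuous).pow 2).add ((hU1s.continuous).pow 2)
  have hFdc : Continuous Fd :=
    ((continuous_const.mul hv.continuous).mul hVyc).add
      ((continuous_const.mul hU1s.continuous).mul hU1ys.continuous)
  set E : ℝ → ℝ := fun y => ∫ x in (0:ℝ)..L, Fi (x, y) with hEdef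
  have hEeq : ∀ y, (∫ x in (0:ℝ)..L, ((v x y)^2 + (pdx u x y)^2)) = E y := by
    intro y
    have h : (fun x => (v x y)^2 + (pdx u x y)^2) = fun x => Fi (x, y) := by
      funext x
      rw [pdx_eq]
    show (∫ x in (0:ℝ)..L, ((v x y)^2 + (pdx u x y)^2)) = ∫ x in (0:ℝ)..L, Fi (x, y)
    rw [h]
  -- continuity of the energy
  have hEcont : Continuous E := by
    have h : Continuous (Function.uncurry fun (y : ℝ) (x : ℝ) => Fi (x, y)) :=
      hFic.comp (continuous_snd.prodMk continuous_fst)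
    exact intervalIntegral.continuous_parametric_intervalIntegral_of_continuous' h 0 L
  -- derivative of the energy in the interior
  have hEderiv : ∀ y₀ ∈ Set.Ioo (0:ℝ) L, HasDerivAt E (∫ x in (0:ℝ)..L, Fd (x, y₀)) y₀ := by
    intro y₀ hy₀
    obtain ⟨C, hC⟩ := (isCompact_Icc.prod isCompact_Icc).exists_bound_of_continuousOn
      (s := (Set.Icc (0:ℝ) L) ×ˢ (Set.Icc (y₀ - 1) (y₀ + 1))) hFdc.continuousOn
    have key := intervalIntegral.hasDerivAt_integral_of_dominated_loc_of_deriv_le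
      (𝕜 := ℝ) (μ := volume) (F := fun y x => Fi (x, y)) (F' := fun y x => Fd (x, y))
      (x₀ := y₀) (a := 0) (b := L) (bound := fun _ => C) (s := Metric.ball y₀ 1) (Metric.ball_mem_nhds y₀ one_pos)
      (Filter.Eventually.of_forall fun y =>
        (hFic.comp (continuous_id.prodMk continuous_const)).aestronglyMeasurable)
      ((hFic.comp (continuous_id.prodMk continuous_const)).intervalIntegrable 0 L)
      (hFdc.comp (continuous_id.prodMk continuous_const)).aestronglyMeasurable
      ?_ (intervalIntegrable_const) ?_
    · exact key.2
    · refine Filter.Eventually.of_forall fun t ht y hy => ?_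
      rw [Set.uIoc_of_le hL.le] at ht
      have hyI : y ∈ Set.Icc (y₀ - 1) (y₀ + 1) := by
        rw [Real.ball_eq_Ioo] at hy
        exact ⟨hy.1.le, hy.2.le⟩
      exact hC (t, y) (Set.mk_mem_prod ⟨ht.1.le, ht.2⟩ hyI)
    · refine Filter.Eventually.of_forall fun t ht y hy => ?_
      have h1 : HasDerivAt (fun y' => Vf (t, y')) (Vy (t, y)) y :=
        KPaux.hasDerivAt_snd_slice (hVd (t, y))
      have h2 : HasDerivAt (fun y' => U1 (t, y')) (U1y (t, y)) y :=
        KPaux.hasDerivAt_snd_slice (hU1d (t, y))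
      have h3 := (h1.pow 2).add (h2.pow 2)
      have h4 : ((2:ℕ) : ℝ) * Vf (t, y) ^ (2 - 1) * Vy (t, y)
          + ((2:ℕ) : ℝ) * U1 (t, y) ^ (2 - 1) * U1y (t, y) = Fd (t, y) := by
        simp [hFddef]
      rw [h4] at h3
      exact h3
  -- the y-derivative integral vanishes by FTC in x
  have hint0 : ∀ y₀ ∈ Set.Ioo (0:ℝ) L, (∫ x in (0:ℝ)..L, Fd (x, y₀)) = 0 := by
    intro y₀ hy₀
    have hy₀I : y₀ ∈ Set.Icc (0:ℝ) L := ⟨hy₀.1.le, hy₀.2.le⟩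
    set G : ℝ → ℝ := fun x => 2 * U1 (x, y₀) * Uy (x, y₀) - 2 * Vf (x, y₀) * U2 (x, y₀)
      with hGdef
    have hGcont : ContinuousOn G (Set.Icc 0 L) :=
      (((continuous_const.mul (hU1s.continuous.comp
          (continuous_id.prodMk continuous_const))).mul (hUys.continuous.comp
          (continuous_id.prodMk continuous_const))).sub
        ((continuous_const.mul (hv.continuous.comp
          (continuous_id.prodMk continuous_const))).mul (hU2s.continuous.comp
          (continuous_id.prodMk continuous_const)))).continuousOn
    have hGd : ∀ x ∈ Set.Ioo (0:ℝ) L, HasDerivAt G (Fd (x, y₀)) x := by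
      intro x hx
      obtain ⟨e1, e2⟩ := heq' x hx y₀ hy₀
      have d1 : HasDerivAt (fun x' => U1 (x', y₀)) (U2 (x, y₀)) x :=
        KPaux.hasDerivAt_fst_slice (hU1d (x, y₀))
      have d2 : HasDerivAt (fun x' => Uy (x', y₀)) (U1y (x, y₀)) x := by
        have := KPaux.hasDerivAt_fst_slice (hUyd (x, y₀))
        rwa [hcl (x, y₀)] at this
      have d3 : HasDerivAt (fun x' => Vf (x', y₀)) (Vx (x, y₀)) x :=
        KPaux.hasDerivAt_fst_slice (hVd (x, y₀))
      have d4 : HasDerivAt (fun x' => U2 (x', y₀)) (U3 (x, y₀)) x :=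
        KPaux.hasDerivAt_fst_slice (hU2d (x, y₀))
      have hG' := (((hasDerivAt_const x (2:ℝ)).mul d1).mul d2).sub
        (((hasDerivAt_const x (2:ℝ)).mul d3).mul d4)
      have harr : (0 * U1 (x, y₀) + 2 * U2 (x, y₀)) * Uy (x, y₀)
            + 2 * U1 (x, y₀) * U1y (x, y₀)
          - ((0 * Vf (x, y₀) + 2 * Vx (x, y₀)) * U2 (x, y₀)
            + 2 * Vf (x, y₀) * U3 (x, y₀)) = Fd (x, y₀) := by
        have hU3e : U3 (x, y₀) = -Vy (x, y₀) := by linarith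
        rw [e1, hU3e, hFddef]
        ring
      rw [← harr]
      exact hG'
    have hFTC := intervalIntegral.integral_eq_sub_of_hasDerivAt_of_le hL.le hGcont hGd
      ((hFdc.comp (continuous_id.prodMk continuous_const)).intervalIntegrable 0 L)
    rw [hFTC, hGdef]
    have hbL := hb y₀ hy₀I
    have hUyL : Uy (L, y₀) = 0 :=
      hUybd L (fun y' hy' => (hb y' hy').2.1) y₀ hy₀
    have hUy0 : Uy (0, y₀) = 0 :=
      hUybd 0 (fun y' hy' => (hb y' hy').1) y₀ hy₀
    have hVL : Vf (L, y₀) = 0 := hbL.2.2.2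
    have hV0 : Vf (0, y₀) = 0 := hbL.2.2.1
    simp [hUyL, hUy0, hVL, hV0]
  -- constancy
  have hE0 : ∀ y ∈ Set.Ioo (0:ℝ) L, HasDerivAt E 0 y := by
    intro y hy
    have := hEderiv y hy
    rwa [hint0 y hy] at this
  have hconst : ∀ y ∈ Set.Icc (0:ℝ) L, E y = E (L/2) := by
    have hmem : L/2 ∈ Set.Ioo (0:ℝ) L := ⟨by linarith, by linarith⟩
    have hIoo : Set.EqOn E (fun _ => E (L/2)) (Set.Ioo 0 L) := by
      intro y hy
      refine (convex_Ioo (0:ℝ) L).is_const_of_fderivWithin_eq_zero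
        (fun z hz => (hE0 z hz).differentiableAt.differentiableWithinAt)
        (fun z hz => ?_) hy hmem
      rw [fderivWithin_of_isOpen isOpen_Ioo hz, (hE0 z hz).hasFDerivAt.fderiv]
      ext
      simp
    have hclos : Set.EqOn E (fun _ => E (L/2)) (closure (Set.Ioo 0 L)) :=
      hIoo.closure hEcont continuous_const
    intro y hy
    rw [← closure_Ioo hL.ne] at hy
    exact hclos hy
  intro y₁ hy₁ y₂ hy₂
  rw [hEeq y₁, hEeq y₂, hconst y₁ hy₁, hconst y₂ hy₂]

end
end
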